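/- Existence and uniqueness of minimal Hilbert decompositions (Proposition 5.2). Let M : R^n → vec be a finitely presentable persistence module. Then the function Hil(M) admits a minimal Hilbert decomposition (P*, Q*); moreover, for every other minimal Hilbert decomposition (P, Q) of Hil(M), one has P ≅ P* and Q ≅ Q*. -/

import Mathlib

set_option linter.unusedVariables false
set_option maxHeartbeats 800000

open scoped Classical ENNReal

noncomputable section

/-- Points of `R^n`. The metric on `Fin n → ℝ` is the sup-metric, so `dist` is `‖·‖_∞`. -/
abbrev Pt (n : ℕ) := Fin n → ℝ

/-- An `n`-parameter persistence module: a functor from the poset `R^n`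
to finite-dimensional `k`-vector spaces. -/
structure PersMod (k : Type) [Field k] (n : ℕ) where
  X : Pt n → Type
  [acg : ∀ r, AddCommGroup (X r)]
  [mod : ∀ r, Module k (X r)]
  [fd : ∀ r, FiniteDimensional k (X r)]
  map : ∀ {r s : Pt n}, r ≤ s → (X r →ₗ[k] X s)
  map_id : ∀ r : Pt n, map (le_refl r) = LinearMap.id
  map_comp : ∀ {r s t : Pt n} (h₁ : r ≤ s) (h₂ : s ≤ t),
    (map h₂).comp (map h₁) = map (h₁.trans h₂)

attribute [instance] PersMod.acg PersMod.mod PersMod.fd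

variable {k : Type} [Field k] {n : ℕ}

/-- A morphism of persistence modules: a natural transformation. -/
structure PersHom (M N : PersMod k n) where
  app : ∀ r, M.X r →ₗ[k] N.X r
  natural : ∀ {r s : Pt n} (h : r ≤ s),
    (N.map h).comp (app r) = (app s).comp (M.map h)

def shiftPt (ε : ℝ) (r : Pt n) : Pt n := fun i => r i + ε

lemma shiftPt_mono {ε : ℝ} {r s : Pt n} (h : r ≤ s) : shiftPt ε r ≤ shiftPt ε s :=
  fun i => add_le_add (h i) (le_refl ε)

lemma le_shiftPt {ε : ℝ} (hε : 0 ≤ ε) (r : Pt n) : r ≤ shiftPt ε r :=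
  fun i => le_add_of_nonneg_right hε

/-- The `ε`-shift of a persistence module. -/
def PersMod.shift (M : PersMod k n) (ε : ℝ) : PersMod k n where
  X r := M.X (shiftPt ε r)
  map h := M.map (shiftPt_mono h)
  map_id r := M.map_id _
  map_comp h₁ h₂ := M.map_comp _ _

/-- `M` and `N` are `ε`-interleaved. -/
def Interleaved (ε : ℝ) (M N : PersMod k n) : Prop :=
  ∃ hε : 0 ≤ ε,
  ∃ (f : PersHom M (N.shift ε)) (g : PersHom N (M.shift ε)),
    (∀ r : Pt n, (g.app (shiftPt ε r)).comp (f.app r)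
        = M.map ((le_shiftPt hε r).trans (le_shiftPt hε _))) ∧
    (∀ r : Pt n, (f.app (shiftPt ε r)).comp (g.app r)
        = N.map ((le_shiftPt hε r).trans (le_shiftPt hε _)))

/-- The interleaving distance. -/
def interleavingDist (M N : PersMod k n) : ℝ≥0∞ :=
  sInf { e : ℝ≥0∞ | ∃ ε : ℝ, e = ENNReal.ofReal ε ∧ Interleaved ε M N }

/-- The free persistence module `⊕_i F_{L i}`, where `F_j` is the "upset" interval module
generated at `j`. -/
def freeModFin {m : ℕ} (L : Fin m → Pt n) : PersMod k n where
  X r := {i : Fin m // L i ≤ r} → k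
  map {r s} h :=
    { toFun := fun f i => if h' : L i.1 ≤ r then f ⟨i.1, h'⟩ else 0
      map_add' := by
        intro f g; funext i
        by_cases h' : L i.1 ≤ r <;> simp [h']
      map_smul' := by
        intro c f; funext i
        by_cases h' : L i.1 ≤ r <;> simp [h'] }
  map_id r := by
    apply LinearMap.ext; intro f; funext i
    show (if h' : L i.1 ≤ r then f ⟨i.1, h'⟩ else 0) = f i
    rw [dif_pos i.2]
  map_comp {r s t} h₁ h₂ := by
    apply LinearMap.ext; intro f; funext i
    show (if hs : L i.1 ≤ s then
            (if hr : L i.1 ≤ r then f ⟨i.1, hr⟩ else 0) else 0)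
        = (if hr : L i.1 ≤ r then f ⟨i.1, hr⟩ else 0)
    by_cases hr : L i.1 ≤ r
    · simp [hr, hr.trans h₁]
    · simp [hr]

/-- Isomorphism of persistence modules. -/
def PersIso (M N : PersMod k n) : Prop :=
  ∃ (f : PersHom M N) (g : PersHom N M),
    (∀ r, (g.app r).comp (f.app r) = LinearMap.id) ∧
    (∀ r, (f.app r).comp (g.app r) = LinearMap.id)

/-- `P` is free of finite rank with barcode `B`. -/
def IsFreeWith (P : PersMod k n) (B : Multiset (Pt n)) : Prop :=
  ∃ (m : ℕ) (L : Fin m → Pt n), B = (List.ofFn L : Multiset (Pt n)) ∧ PersIso P (freeModFin L)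

/-- `M` is finitely presentable: it is (isomorphic to) the cokernel of a morphism
between free modules of finite rank. -/
def FinitelyPresentable (M : PersMod k n) : Prop :=
  ∃ (c r : ℕ) (Lc : Fin c → Pt n) (Lr : Fin r → Pt n)
    (f : PersHom (freeModFin Lc) (freeModFin Lr)) (g : PersHom (freeModFin Lr) M),
    (∀ x, Function.Surjective (g.app x)) ∧
    (∀ x, LinearMap.range (f.app x) = LinearMap.ker (g.app x))

/-- A resolution of `M` of length `len`:
an exact sequence `0 → P_len → ⋯ → P_0 → M → 0` (encoded with `P j = 0` for `j > len`). -/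
structure Res (M : PersMod k n) where
  len : ℕ
  P : ℕ → PersMod k n
  d : ∀ j : ℕ, PersHom (P (j + 1)) (P j)
  aug : PersHom (P 0) M
  aug_surj : ∀ r, Function.Surjective (aug.app r)
  exact_zero : ∀ r, LinearMap.range ((d 0).app r) = LinearMap.ker (aug.app r)
  exact_succ : ∀ (j : ℕ) (r), LinearMap.range ((d (j + 1)).app r) = LinearMap.ker ((d j).app r)
  vanish : ∀ j, len < j → ∀ r, ∀ x : (P j).X r, x = 0

/-- Projectivity in the category of persistence modules
(where epimorphisms are the pointwise surjections). -/
def IsProjectiveMod (P : PersMod k n) : Prop :=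
  ∀ (A B : PersMod k n) (e : PersHom A B), (∀ r, Function.Surjective (e.app r)) →
    ∀ f : PersHom P B, ∃ g : PersHom P A, ∀ r, (e.app r).comp (g.app r) = f.app r

/-- An `ε`-bijection between two multisets of points of `R^n`. -/
def IsMatching (ε : ℝ) (B C : Multiset (Pt n)) : Prop :=
  ∃ m : Multiset (Pt n × Pt n),
    m.map Prod.fst = B ∧ m.map Prod.snd = C ∧ ∀ p ∈ m, dist p.1 p.2 ≤ ε

/-- The bottleneck distance between barcodes. -/
def bottleneckDist (B C : Multiset (Pt n)) : ℝ≥0∞ :=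
  sInf { e : ℝ≥0∞ | ∃ ε : ℝ, 0 ≤ ε ∧ e = ENNReal.ofReal ε ∧ IsMatching ε B C }

/-- A signed barcode: a pair (positive part, negative part) of barcodes. -/
abbrev SignedBarcode (n : ℕ) := Multiset (Pt n) × Multiset (Pt n)

/-- The bottleneck dissimilarity on signed barcodes. -/
def dBhat (B C : SignedBarcode n) : ℝ≥0∞ :=
  bottleneckDist (B.1 + C.2) (C.1 + B.2)

/-- Binary direct sum of persistence modules. -/
def PersMod.dsum (M N : PersMod k n) : PersMod k n where
  X r := M.X r × N.X r
  map h := (M.map h).prodMap (N.map h)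
  map_id r := by
    apply LinearMap.ext; intro x
    show (M.map (le_refl r) x.1, N.map (le_refl r) x.2) = x
    rw [M.map_id, N.map_id]; rfl
  map_comp {r s t} h₁ h₂ := by
    apply LinearMap.ext; intro x
    show (M.map h₂ (M.map h₁ x.1), N.map h₂ (N.map h₁ x.2))
        = (M.map (h₁.trans h₂) x.1, N.map (h₁.trans h₂) x.2)
    rw [← M.map_comp h₁ h₂, ← N.map_comp h₁ h₂]; rfl

/-- Finite direct sum of persistence modules. -/
def dsumFin {m : ℕ} (P : Fin m → PersMod k n) : PersMod k n where
  X r := ∀ j, (P j).X r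
  map h := LinearMap.pi fun j => ((P j).map h).comp (LinearMap.proj j)
  map_id r := by
    apply LinearMap.ext; intro x; funext j
    show (P j).map (le_refl r) (x j) = x j
    rw [(P j).map_id]; rfl
  map_comp {r s t} h₁ h₂ := by
    apply LinearMap.ext; intro x; funext j
    show (P j).map h₂ ((P j).map h₁ (x j)) = (P j).map (h₁.trans h₂) (x j)
    rw [← (P j).map_comp h₁ h₂]; rfl

/-- The zero persistence module. -/
def zeroMod : PersMod k n := freeModFin (fun i : Fin 0 => i.elim0)

/-- The Hilbert function of a persistence module. -/
def Hil (M : PersMod k n) (r : Pt n) : ℕ := Module.finrank k (M.X r)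

/-- Number of points of `B` (with multiplicity) that are `≤ r`. -/
def countLe (B : Multiset (Pt n)) (r : Pt n) : ℕ := Multiset.card (B.filter (fun i => i ≤ r))

/-- `R` is a free resolution of `M` with barcodes `B j`. -/
def IsFreeRes {M : PersMod k n} (R : Res M) (B : ℕ → Multiset (Pt n)) : Prop :=
  ∀ j, IsFreeWith (R.P j) (B j)

/-- `R` is a minimal free resolution of `M` with barcodes `B j`: in every homological degree
its term has minimal rank among all free resolutions of `M`. -/
def IsMinFreeRes {M : PersMod k n} (R : Res M) (B : ℕ → Multiset (Pt n)) : Prop :=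
  IsFreeRes R B ∧
  ∀ (R' : Res M) (B' : ℕ → Multiset (Pt n)), IsFreeRes R' B' →
    ∀ j, Multiset.card (B j) ≤ Multiset.card (B' j)

/-- Multiset union of the `B j` over even `j ≤ ℓ`. -/
def evenPart (B : ℕ → Multiset (Pt n)) (ℓ : ℕ) : Multiset (Pt n) :=
  ∑ j ∈ Finset.range (ℓ + 1), if Even j then B j else 0

/-- Multiset union of the `B j` over odd `j ≤ ℓ`. -/
def oddPart (B : ℕ → Multiset (Pt n)) (ℓ : ℕ) : Multiset (Pt n) :=
  ∑ j ∈ Finset.range (ℓ + 1), if ¬ Even j then B j else 0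

/-- `S` is the Betti signed barcode of `M`: the pair (even Betti numbers, odd Betti numbers)
coming from a minimal free resolution of `M`. -/
def IsBettiOf (M : PersMod k n) (S : SignedBarcode n) : Prop :=
  ∃ (R : Res M) (B : ℕ → Multiset (Pt n)), IsMinFreeRes R B ∧
    S = (evenPart B R.len, oddPart B R.len)

/-- `(P, Q)` (with barcodes `BP`, `BQ`) is a minimal Hilbert decomposition of `η`. -/
def IsMinHilbDecomp (η : Pt n → ℤ) (P Q : PersMod k n) (BP BQ : Multiset (Pt n)) : Prop :=
  IsFreeWith P BP ∧ IsFreeWith Q BQ ∧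
  (∀ r, η r = (Hil P r : ℤ) - (Hil Q r : ℤ)) ∧
  ∀ x : Pt n, ¬ (x ∈ BP ∧ x ∈ BQ)

/-- The `ℓ¹`-distance on `R^n`. -/
def l1dist (x y : Pt n) : ℝ := ∑ i, |x i - y i|

/-- The 1-Wasserstein cost of a matching (encoded as a multiset of pairs). -/
def matchCost (m : Multiset (Pt n × Pt n)) : ℝ := (m.map fun p => l1dist p.1 p.2).sum

/-- The 1-Wasserstein distance between barcodes. -/
def wassDist (B C : Multiset (Pt n)) : ℝ≥0∞ :=
  sInf { e : ℝ≥0∞ | ∃ m : Multiset (Pt n × Pt n),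
    m.map Prod.fst = B ∧ m.map Prod.snd = C ∧ e = ENNReal.ofReal (matchCost m) }

/-- The signed 1-Wasserstein distance on signed barcodes. -/
def dW1hat (B C : SignedBarcode n) : ℝ≥0∞ := wassDist (B.1 + C.2) (C.1 + B.2)

/-- The reduction of a signed barcode: cancel common points with multiplicity. -/
def reduceSB (B : SignedBarcode n) : SignedBarcode n := (B.1 - B.2, B.2 - B.1)

/-! ### Auxiliary lemmas -/

/-- Composition of persistence morphisms. -/
def PersHom.compHom {A B C : PersMod k n} (f : PersHom A B) (g : PersHom B C) :
    PersHom A C where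
  app r := (g.app r).comp (f.app r)
  natural {r s} h := by
    apply LinearMap.ext; intro x
    have hf := LinearMap.congr_fun (f.natural h) x
    have hg := LinearMap.congr_fun (g.natural h) (f.app r x)
    simp only [LinearMap.comp_apply] at hf hg ⊢
    rw [hg, hf]

lemma persIso_refl (M : PersMod k n) : PersIso M M :=
  ⟨⟨fun _ => LinearMap.id, fun _ => rfl⟩, ⟨fun _ => LinearMap.id, fun _ => rfl⟩,
    fun _ => rfl, fun _ => rfl⟩

lemma persIso_symm {M N : PersMod k n} (h : PersIso M N) : PersIso N M := by
  obtain ⟨f, g, h1, h2⟩ := h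
  exact ⟨g, f, h2, h1⟩

lemma persIso_trans {M N O : PersMod k n} (h : PersIso M N) (h' : PersIso N O) :
    PersIso M O := by
  obtain ⟨f, g, h1, h2⟩ := h
  obtain ⟨f', g', h1', h2'⟩ := h'
  refine ⟨f.compHom f', g'.compHom g, fun r => ?_, fun r => ?_⟩ <;>
  · apply LinearMap.ext; intro x
    simp only [PersHom.compHom, LinearMap.comp_apply]
    first
      | rw [show ∀ y, g.app r (g'.app r y) = _ from fun y => rfl]
        have e1 := LinearMap.congr_fun (h1' r) (f.app r x)
        have e2 := LinearMap.congr_fun (h1 r) x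
        simp only [LinearMap.comp_apply, LinearMap.id_apply] at e1 e2
        rw [e1, e2]; rfl
      | rw [show ∀ y, f'.app r (f.app r y) = _ from fun y => rfl]
        have e1 := LinearMap.congr_fun (h2 r) (g'.app r x)
        have e2 := LinearMap.congr_fun (h2' r) x
        simp only [LinearMap.comp_apply, LinearMap.id_apply] at e1 e2
        rw [e1, e2]; rfl

lemma hil_eq_of_persIso {M N : PersMod k n} (h : PersIso M N) (r : Pt n) :
    Hil M r = Hil N r := by
  obtain ⟨f, g, h1, h2⟩ := h
  have e : M.X r ≃ₗ[k] N.X r :=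
    LinearEquiv.ofLinear (f.app r) (g.app r)
      (by apply LinearMap.ext; intro x; exact LinearMap.congr_fun (h2 r) x)
      (by apply LinearMap.ext; intro x; exact LinearMap.congr_fun (h1 r) x)
  exact e.finrank_eq

lemma hil_freeModFin {m : ℕ} (L : Fin m → Pt n) (r : Pt n) :
    Hil (k := k) (freeModFin L) r = countLe (List.ofFn L : Multiset (Pt n)) r := by
  show Module.finrank k ({i : Fin m // L i ≤ r} → k) = _
  rw [Module.finrank_fintype_fun_eq_card]
  rw [Fintype.card_subtype]
  unfold countLe
  rw [show (List.ofFn L : Multiset (Pt n)) = Multiset.map L Finset.univ.val from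
    (Fin.univ_val_map L).symm]
  rw [Multiset.filter_map, Multiset.card_map]
  rfl

lemma countLe_add (A B : Multiset (Pt n)) (r : Pt n) :
    countLe (A + B) r = countLe A r + countLe B r := by
  unfold countLe; rw [Multiset.filter_add, Multiset.card_add]

lemma countLe_zero (r : Pt n) : countLe (0 : Multiset (Pt n)) r = 0 := rfl

lemma countLe_replicate (a : ℕ) (p : Pt n) (r : Pt n) :
    countLe (Multiset.replicate a p) r = if p ≤ r then a else 0 := by
  unfold countLe
  by_cases h : p ≤ r
  · rw [if_pos h, Multiset.filter_eq_self.mpr, Multiset.card_replicate]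
    intro b hb; rw [Multiset.eq_of_mem_replicate hb]; exact h
  · rw [if_neg h, Multiset.filter_eq_nil.mpr, Multiset.card_zero]
    intro b hb; rw [Multiset.eq_of_mem_replicate hb]; exact h

lemma countLe_cons (x : Pt n) (B : Multiset (Pt n)) (r : Pt n) :
    countLe (x ::ₘ B) r = countLe B r + (if x ≤ r then 1 else 0) := by
  unfold countLe
  rw [Multiset.filter_cons]
  by_cases h : x ≤ r
  · simp [h, add_comm]
  · simp [h]

lemma countLe_finsetSum {ι : Type} (s : Finset ι) (f : ι → Multiset (Pt n)) (r : Pt n) :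
    countLe (∑ i ∈ s, f i) r = ∑ i ∈ s, countLe (f i) r := by
  classical
  induction s using Finset.induction_on with
  | empty => simp [countLe_zero]
  | insert a s hx ih =>
    rw [Finset.sum_insert hx, Finset.sum_insert hx, countLe_add, ih]

/-- `countLe` determines the multiset. -/
lemma countLe_inj : ∀ (N : ℕ) (B C : Multiset (Pt n)), Multiset.card B ≤ N →
    (∀ r, countLe B r = countLe C r) → B = C := by
  intro N
  induction N with
  | zero =>
    intro B C hB h
    have hB0 : B = 0 := Multiset.card_eq_zero.mp (Nat.le_zero.mp hB)
    subst hB0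
    by_contra hC
    obtain ⟨x, hx⟩ := Multiset.exists_mem_of_ne_zero (fun h0 => hC h0.symm)
    have : 0 < countLe C x := by
      unfold countLe
      exact Multiset.card_pos_iff_exists_mem.mpr
        ⟨x, Multiset.mem_filter.mpr ⟨hx, le_refl x⟩⟩
    rw [← h x] at this
    simp [countLe_zero] at this
  | succ N ih =>
    intro B C hB h
    by_cases hB0 : B = 0
    · exact ih B C (by simp [hB0]) h
    have hBC : B + C ≠ 0 := by simp [hB0]
    obtain ⟨x, hxmem, hxmin⟩ := (B + C).toFinset.exists_minimal
      (by rwa [Multiset.toFinset_nonempty])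
    rw [Multiset.mem_toFinset] at hxmem
    -- countLe at x equals count at x, for both B and C
    have key : ∀ D : Multiset (Pt n), (∀ y ∈ D, y ∈ B + C) →
        countLe D x = Multiset.count x D := by
      intro D hD
      unfold countLe
      rw [Multiset.count_eq_card_filter_eq]
      congr 1
      apply Multiset.filter_congr
      intro y hy
      constructor
      · intro hyx
        by_contra hne
        exact hne (le_antisymm (hxmin (Multiset.mem_toFinset.mpr (hD y hy)) hyx) hyx)
      · intro e; subst e; rfl
    have hcB : countLe B x = Multiset.count x B :=
      key B (fun y hy => Multiset.mem_add.mpr (Or.inl hy))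
    have hcC : countLe C x = Multiset.count x C :=
      key C (fun y hy => Multiset.mem_add.mpr (Or.inr hy))
    have hcnt : Multiset.count x B = Multiset.count x C := by
      rw [← hcB, ← hcC, h x]
    have hxB : x ∈ B := by
      rcases Multiset.mem_add.mp hxmem with hx | hx
      · exact hx
      · rw [← Multiset.count_pos] at hx ⊢; rwa [hcnt]
    have hxC : x ∈ C := by rw [← Multiset.count_pos, ← hcnt, Multiset.count_pos]; exact hxB
    have hBe : B = x ::ₘ B.erase x := (Multiset.cons_erase hxB).symm
    have hCe : C = x ::ₘ C.erase x := (Multiset.cons_erase hxC).symm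
    have h' : ∀ r, countLe (B.erase x) r = countLe (C.erase x) r := by
      intro r
      have := h r
      rw [hBe, hCe, countLe_cons, countLe_cons] at this
      omega
    have hcard : Multiset.card (B.erase x) ≤ N := by
      rw [Multiset.card_erase_of_mem hxB, Nat.pred_eq_sub_one]
      have h1 : 0 < Multiset.card B := Multiset.card_pos.mpr hB0
      omega
    rw [hBe, hCe, ih _ _ hcard h']

/-- Möbius-type coefficients: `mobCoef F T` is defined so that
`∑_{T ⊆ S} mobCoef F T = F S`. -/
def mobCoef {α : Type} [DecidableEq α] (F : Finset α → ℤ) (T : Finset α) : ℤ :=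
  F T - ∑ U ∈ (T.powerset.erase T).attach, mobCoef F U.1
termination_by T.card
decreasing_by
  have h1 : U.1 ∈ T.powerset.erase T := U.2
  have h2 : U.1 ⊆ T := Finset.mem_powerset.mp (Finset.mem_of_mem_erase h1)
  have h3 : U.1 ≠ T := Finset.ne_of_mem_erase h1
  exact Finset.card_lt_card (HasSubset.Subset.ssubset_of_ne h2 h3)

lemma mobCoef_spec {α : Type} [DecidableEq α] (F : Finset α → ℤ) (S : Finset α) :
    ∑ T ∈ S.powerset, mobCoef F T = F S := by
  have hS : mobCoef F S = F S - ∑ U ∈ S.powerset.erase S, mobCoef F U := by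
    rw [mobCoef, Finset.sum_attach]
  rw [← Finset.sum_erase_add _ _ (Finset.mem_powerset_self S), hS]
  ring

lemma mobCoef_empty {α : Type} [DecidableEq α] (F : Finset α → ℤ) :
    mobCoef F ∅ = F ∅ := by
  have := mobCoef_spec F (∅ : Finset α)
  simpa using this

/-- Extension by zero, as a linear map. -/
def extZero {r : ℕ} (p : Fin r → Prop) : ({j // p j} → k) →ₗ[k] (Fin r → k) where
  toFun w := fun j => if h : p j then w ⟨j, h⟩ else 0
  map_add' w w' := by funext j; by_cases h : p j <;> simp [h]
  map_smul' a w := by funext j; by_cases h : p j <;> simp [h]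

lemma extZero_injective {r : ℕ} (p : Fin r → Prop) :
    Function.Injective (extZero (k := k) p) := by
  intro w w' h
  funext j
  have e := congrFun h j.1
  simpa [extZero, j.2] using e

/-- The standard basis vector of a free module at a point above its grade. -/
def basisAt {c : ℕ} (Lc : Fin c → Pt n) (i : Fin c) {x : Pt n} (hx : Lc i ≤ x) :
    (freeModFin (k := k) Lc).X x :=
  show ({i' : Fin c // Lc i' ≤ x} → k) from fun i' => if i'.1 = i then 1 else 0

lemma map_basisAt {c : ℕ} (Lc : Fin c → Pt n) (i : Fin c) {x y : Pt n}
    (hxy : x ≤ y) (hx : Lc i ≤ x) :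
    (freeModFin (k := k) Lc).map hxy (basisAt Lc i hx) = basisAt Lc i (hx.trans hxy) := by
  funext i'
  show (if h' : Lc i'.1 ≤ x then basisAt Lc i hx ⟨i'.1, h'⟩ else 0)
      = (if i'.1 = i then 1 else 0)
  by_cases hi : i'.1 = i
  · rw [if_pos hi]
    have h' : Lc i'.1 ≤ x := by rw [hi]; exact hx
    rw [dif_pos h']
    show (if i'.1 = i then (1 : k) else 0) = 1
    rw [if_pos hi]
  · rw [if_neg hi]
    by_cases h' : Lc i'.1 ≤ x
    · rw [dif_pos h']
      show (if i'.1 = i then (1 : k) else 0) = 0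
      rw [if_neg hi]
    · rw [dif_neg h']

lemma basisAt_apply {c : ℕ} (Lc : Fin c → Pt n) (i : Fin c) {x : Pt n} (hx : Lc i ≤ x)
    (i'' : {i' : Fin c // Lc i' ≤ x}) :
    basisAt (k := k) Lc i hx i'' = if i''.1 = i then 1 else 0 := rfl

/-- The column of the "global matrix" of a morphism of free modules. -/
def colVec {c r : ℕ} (Lc : Fin c → Pt n) (Lr : Fin r → Pt n)
    (f : PersHom (freeModFin (k := k) Lc) (freeModFin Lr)) (i : Fin c) : Fin r → k :=
  fun j => if h : Lr j ≤ Lc i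
    then f.app (Lc i) (basisAt Lc i (le_refl (Lc i))) ⟨j, h⟩ else 0

lemma colVec_spec {c r : ℕ} (Lc : Fin c → Pt n) (Lr : Fin r → Pt n)
    (f : PersHom (freeModFin (k := k) Lc) (freeModFin Lr)) (i : Fin c)
    {x : Pt n} (hx : Lc i ≤ x) (j : Fin r) (hj : Lr j ≤ x) :
    f.app x (basisAt Lc i hx) ⟨j, hj⟩ = colVec Lc Lr f i j := by
  have nat := LinearMap.congr_fun (f.natural hx) (basisAt Lc i (le_refl (Lc i)))
  simp only [LinearMap.comp_apply] at nat
  rw [map_basisAt] at nat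
  have hb : basisAt (k := k) Lc i ((le_refl (Lc i)).trans hx) = basisAt (k := k) Lc i hx := rfl
  rw [hb] at nat
  rw [← nat]
  show (if h : Lr j ≤ Lc i then f.app (Lc i) (basisAt Lc i (le_refl (Lc i))) ⟨j, h⟩ else 0)
      = colVec Lc Lr f i j
  rfl

lemma rank_eq_span_cols {c r : ℕ} (Lc : Fin c → Pt n) (Lr : Fin r → Pt n)
    (f : PersHom (freeModFin (k := k) Lc) (freeModFin Lr)) (x : Pt n) :
    Module.finrank k (LinearMap.range (f.app x)) =
    Module.finrank k (Submodule.span k (colVec Lc Lr f '' {i | Lc i ≤ x})) := by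
  set E := extZero (k := k) (fun j : Fin r => Lr j ≤ x) with hE_def
  have hE : Function.Injective E := extZero_injective _
  set Φ : (freeModFin (k := k) Lc).X x →ₗ[k] (Fin r → k) := E.comp (f.app x) with hΦ_def
  -- step 1 : rank f.app x = rank Φ
  have h1 : Module.finrank k (LinearMap.range (f.app x)) =
      Module.finrank k (LinearMap.range Φ) := by
    rw [hΦ_def]; erw [LinearMap.range_comp]
    exact (Submodule.equivMapOfInjective E hE (LinearMap.range (f.app x))).finrank_eq
  rw [h1]
  -- step 2 : range Φ = span of the columns
  have hΦb : ∀ i' : {i : Fin c // Lc i ≤ x},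
      Φ ((Pi.basisFun k {i : Fin c // Lc i ≤ x}) i') = colVec Lc Lr f i'.1 := by
    intro i'
    have hbas : ((Pi.basisFun k {i : Fin c // Lc i ≤ x}) i' : {i : Fin c // Lc i ≤ x} → k)
        = basisAt Lc i'.1 i'.2 := by
      funext i''
      rw [Pi.basisFun_apply, basisAt_apply]
      by_cases h : i'' = i'
      · subst h
        rw [Pi.single_eq_same]
        exact (if_pos rfl).symm
      · rw [Pi.single_eq_of_ne h]
        exact (if_neg (fun e => h (Subtype.ext e))).symm
    rw [hbas]
    funext j
    show (if hj : Lr j ≤ x then f.app x (basisAt Lc i'.1 i'.2) ⟨j, hj⟩ else 0)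
        = colVec Lc Lr f i'.1 j
    by_cases hj : Lr j ≤ x
    · rw [dif_pos hj, colVec_spec]
    · rw [dif_neg hj]
      unfold colVec
      rw [dif_neg (fun h => hj (h.trans i'.2))]
  have hcomp : ⇑Φ ∘ ⇑(Pi.basisFun k {i : Fin c // Lc i ≤ x})
      = (colVec Lc Lr f) ∘ (Subtype.val : {i : Fin c // Lc i ≤ x} → Fin c) :=
    funext hΦb
  have hr : LinearMap.range Φ = Submodule.span k (colVec Lc Lr f '' {i | Lc i ≤ x}) := by
    have hb := (Pi.basisFun k {i : Fin c // Lc i ≤ x}).span_eq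
    rw [LinearMap.range_eq_map]; erw [← hb, Submodule.map_span]
    erw [← Set.range_comp, hcomp, Set.range_comp, Subtype.range_coe]
    rfl
  rw [hr]

/-- Hilbert function of a finitely presented module via the presentation. -/
lemma hil_presented {M : PersMod k n} {c r : ℕ} {Lc : Fin c → Pt n} {Lr : Fin r → Pt n}
    (f : PersHom (freeModFin Lc) (freeModFin Lr)) (g : PersHom (freeModFin Lr) M)
    (hs : ∀ x, Function.Surjective (g.app x))
    (he : ∀ x, LinearMap.range (f.app x) = LinearMap.ker (g.app x)) (x : Pt n) :
    (Hil M x : ℤ) = (countLe (List.ofFn Lr : Multiset (Pt n)) x : ℤ)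
      - (Module.finrank k (LinearMap.range (f.app x)) : ℤ) := by
  have hrn := LinearMap.finrank_range_add_finrank_ker (g.app x)
  have htop : LinearMap.range (g.app x) = ⊤ := LinearMap.range_eq_top.mpr (hs x)
  rw [htop, finrank_top] at hrn
  rw [he x] at *
  have hfree := hil_freeModFin (k := k) Lr x
  unfold Hil at *
  omega

/-- Every finitely presentable module has Hilbert function a difference of
`countLe` functions. -/
lemma exists_countLe_repr (M : PersMod k n) (hM : FinitelyPresentable M) :
    ∃ B C : Multiset (Pt n), ∀ x, (Hil M x : ℤ) = (countLe B x : ℤ) - (countLe C x : ℤ) := by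
  obtain ⟨c, r, Lc, Lr, f, g, hs, he⟩ := hM
  set F : Finset (Fin c) → ℤ :=
    fun T => (Module.finrank k (Submodule.span k (colVec Lc Lr f '' ↑T)) : ℤ) with hF_def
  set pT : Finset (Fin c) → Pt n :=
    fun T => if hT : T.Nonempty then (fun coord => T.sup' hT (fun i => Lc i coord))
      else (fun _ => 0) with hpT_def
  set idx : Finset (Finset (Fin c)) :=
    Finset.univ.powerset.filter (fun T => T.Nonempty) with hidx_def
  refine ⟨(List.ofFn Lr : Multiset (Pt n)) +
      ∑ T ∈ idx, Multiset.replicate (-(mobCoef F T)).toNat (pT T),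
    ∑ T ∈ idx, Multiset.replicate (mobCoef F T).toNat (pT T), fun x => ?_⟩
  have hpT_le : ∀ T : Finset (Fin c), T.Nonempty → (pT T ≤ x ↔ ∀ i ∈ T, Lc i ≤ x) := by
    intro T hT
    rw [hpT_def]
    simp only [dif_pos hT]
    constructor
    · intro h i hi coord
      exact le_trans (Finset.le_sup' (fun i => Lc i coord) hi) (h coord)
    · intro h coord
      exact Finset.sup'_le hT _ (fun i hi => h i hi coord)
  -- the rank as a sum of mobius coefficients
  have hrank : (Module.finrank k (LinearMap.range (f.app x)) : ℤ)
      = ∑ T ∈ idx, (if pT T ≤ x then mobCoef F T else 0) := by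
    rw [rank_eq_span_cols Lc Lr f x]
    have hset : colVec Lc Lr f '' {i | Lc i ≤ x}
        = colVec Lc Lr f '' ↑(Finset.univ.filter (fun i => Lc i ≤ x)) := by
      apply congrArg
      ext i
      simp
    rw [hset]
    have := mobCoef_spec F (Finset.univ.filter (fun i => Lc i ≤ x))
    rw [hF_def] at this
    rw [show ((Module.finrank k (Submodule.span k
        (colVec Lc Lr f '' ↑(Finset.univ.filter (fun i => Lc i ≤ x)))) : ℤ))
      = F (Finset.univ.filter (fun i => Lc i ≤ x)) from rfl, ← mobCoef_spec F]
    have hpow : (Finset.univ.filter (fun i => Lc i ≤ x)).powerset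
        = Finset.univ.powerset.filter (fun T => T ⊆ Finset.univ.filter (fun i => Lc i ≤ x)) := by
      ext T
      simp [Finset.mem_powerset]
    rw [hpow, Finset.sum_filter, hidx_def, Finset.sum_filter]
    apply Finset.sum_congr rfl
    intro T hT
    by_cases hTne : T.Nonempty
    · simp only [hTne, if_true]
      have hiff : (T ⊆ Finset.univ.filter (fun i => Lc i ≤ x)) ↔ pT T ≤ x := by
        rw [hpT_le T hTne]
        constructor
        · intro h i hi
          exact (Finset.mem_filter.mp (h hi)).2
        · intro h i hi
          exact Finset.mem_filter.mpr ⟨Finset.mem_univ i, h i hi⟩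
      exact if_congr hiff rfl rfl
    · have hTe : T = ∅ := Finset.not_nonempty_iff_eq_empty.mp hTne
      subst hTe
      simp only [hTne, if_false, Finset.empty_subset, if_true]
      rw [mobCoef_empty, hF_def]
      simp
  -- countLe of the two sums
  have hplus : (countLe (∑ T ∈ idx, Multiset.replicate (mobCoef F T).toNat (pT T)) x : ℤ)
      = ∑ T ∈ idx, (if pT T ≤ x then ((mobCoef F T).toNat : ℤ) else 0) := by
    rw [countLe_finsetSum]
    push_cast
    apply Finset.sum_congr rfl
    intro T hT
    rw [countLe_replicate]
    split_ifs <;> simp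
  have hminus : (countLe (∑ T ∈ idx, Multiset.replicate (-(mobCoef F T)).toNat (pT T)) x : ℤ)
      = ∑ T ∈ idx, (if pT T ≤ x then (((-(mobCoef F T))).toNat : ℤ) else 0) := by
    rw [countLe_finsetSum]
    push_cast
    apply Finset.sum_congr rfl
    intro T hT
    rw [countLe_replicate]
    split_ifs <;> simp
  rw [countLe_add, hil_presented f g hs he x, hrank]
  push_cast
  rw [hplus, hminus]
  have hterm : ∀ T ∈ idx, (if pT T ≤ x then mobCoef F T else 0)
      = (if pT T ≤ x then ((mobCoef F T).toNat : ℤ) else 0)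
        - (if pT T ≤ x then (((-(mobCoef F T))).toNat : ℤ) else 0) := by
    intro T _
    split_ifs <;> omega
  rw [Finset.sum_congr rfl hterm, Finset.sum_sub_distrib]
  ring

lemma perm_get_equiv {α : Type} : ∀ {l l' : List α}, l.Perm l' →
    ∃ σ : Fin l.length ≃ Fin l'.length, ∀ i, l.get i = l'.get (σ i) := by
  intro l l' h
  induction h with
  | nil => exact ⟨Equiv.refl _, fun i => i.elim0⟩
  | @cons x l₁ l₂ h ih =>
    obtain ⟨σ, hσ⟩ := ih
    refine ⟨⟨Fin.cases (0 : Fin (l₂.length + 1)) (fun i => (σ i).succ),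
      Fin.cases (0 : Fin (l₁.length + 1)) (fun i => (σ.symm i).succ),
      fun i => ?_, fun i => ?_⟩, fun i => ?_⟩
    · refine Fin.cases ?_ (fun j => ?_) i <;> simp
    · refine Fin.cases ?_ (fun j => ?_) i <;> simp
    · refine Fin.cases ?_ (fun j => ?_) i
      · simp
      · simpa using hσ j
  | swap x y l =>
    have hinv : Function.Involutive
        (Fin.cases (Fin.succ (0 : Fin (l.length + 1)))
          (Fin.cases (0 : Fin (l.length + 2)) (fun j' => j'.succ.succ))) := by
      intro i
      refine Fin.cases ?_ (fun j => ?_) i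
      · simp only [Fin.cases_zero, Fin.cases_succ]
      · refine Fin.cases ?_ (fun j' => ?_) j <;>
          simp only [Fin.cases_zero, Fin.cases_succ]
    refine ⟨Function.Involutive.toPerm _ hinv, fun i => ?_⟩
    refine Fin.cases ?_ (fun j => ?_) i
    · simp [Function.Involutive.toPerm]
    · have h10 : (Fin.cases (1 : Fin (l.length + 2))
          (Fin.cases (0 : Fin (l.length + 2)) (fun j' => j'.succ.succ)) :
            Fin (l.length + 2) → Fin (l.length + 2)) 1 = 0 := by
        rw [← Fin.succ_zero_eq_one]
        beta_reduce
        rw [Fin.cases_succ, Fin.cases_zero]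
      refine Fin.cases ?_ (fun j' => ?_) j
      · simp [Function.Involutive.toPerm, h10]
      · simp [Function.Involutive.toPerm]
  | trans h1 h2 ih1 ih2 =>
    obtain ⟨σ, hσ⟩ := ih1
    obtain ⟨σ', hσ'⟩ := ih2
    exact ⟨σ.trans σ', fun i => (hσ i).trans (hσ' (σ i))⟩

lemma exists_equiv_of_ofFn_eq {α : Type} {m m' : ℕ} (L : Fin m → α) (L' : Fin m' → α)
    (h : (List.ofFn L : Multiset α) = (List.ofFn L' : Multiset α)) :
    ∃ σ : Fin m ≃ Fin m', ∀ i, L i = L' (σ i) := by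
  have hp : (List.ofFn L).Perm (List.ofFn L') := Quotient.exact h
  obtain ⟨σ, hσ⟩ := perm_get_equiv hp
  refine ⟨(finCongr (List.length_ofFn (f := L)).symm).trans
    (σ.trans (finCongr (List.length_ofFn (f := L')))), fun i => ?_⟩
  have := hσ (Fin.cast (List.length_ofFn (f := L)).symm i)
  rw [List.get_ofFn, List.get_ofFn] at this
  simpa using this

lemma persIso_freeModFin_of_equiv {m m' : ℕ} {L : Fin m → Pt n} {L' : Fin m' → Pt n}
    (σ : Fin m ≃ Fin m') (hσ : ∀ i, L i = L' (σ i)) :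
    PersIso (freeModFin (k := k) L) (freeModFin (k := k) L') := by
  have hL : ∀ i' : Fin m', L (σ.symm i') = L' i' := fun i' => by
    rw [hσ (σ.symm i'), σ.apply_symm_apply]
  have hL' : ∀ i : Fin m, L' (σ i) = L i := fun i => (hσ i).symm
  refine ⟨⟨fun r =>
      { toFun := fun v => (fun i' => v ⟨σ.symm i'.1, by rw [hL]; exact i'.2⟩ :
          {i' : Fin m' // L' i' ≤ r} → k)
        map_add' := fun v w => rfl
        map_smul' := fun a v => rfl }, ?_⟩,
    ⟨fun r =>
      { toFun := fun w => (fun i => w ⟨σ i.1, by rw [hL']; exact i.2⟩ :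
          {i : Fin m // L i ≤ r} → k)
        map_add' := fun v w => rfl
        map_smul' := fun a v => rfl }, ?_⟩, ?_, ?_⟩
  · intro r s h
    apply LinearMap.ext; intro v
    funext i'
    show (if h' : L' i'.1 ≤ r then v ⟨σ.symm i'.1, by rw [hL]; exact h'⟩ else 0)
        = (if h'' : L (σ.symm i'.1) ≤ r then v ⟨σ.symm i'.1, h''⟩ else 0)
    by_cases h'' : L (σ.symm i'.1) ≤ r
    · rw [dif_pos h'', dif_pos (by rw [← hL i'.1]; exact h'')]
    · rw [dif_neg h'', dif_neg (by rw [hL i'.1] at h''; exact h'')]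
  · intro r s h
    apply LinearMap.ext; intro w
    funext i
    show (if h' : L i.1 ≤ r then w ⟨σ i.1, by rw [hL']; exact h'⟩ else 0)
        = (if h'' : L' (σ i.1) ≤ r then w ⟨σ i.1, h''⟩ else 0)
    by_cases h'' : L' (σ i.1) ≤ r
    · rw [dif_pos h'', dif_pos (by rw [← hL' i.1]; exact h'')]
    · rw [dif_neg h'', dif_neg (by rw [hL' i.1] at h''; exact h'')]
  · intro r
    apply LinearMap.ext; intro v
    funext i
    show v ⟨σ.symm (σ i.1), _⟩ = v i
    have : (⟨σ.symm (σ i.1), by rw [hL]; rw [hL']; exact i.2⟩ : {i : Fin m // L i ≤ r}) = i :=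
      Subtype.ext (σ.symm_apply_apply i.1)
    rw [this]
  · intro r
    apply LinearMap.ext; intro w
    funext i'
    show w ⟨σ (σ.symm i'.1), _⟩ = w i'
    have : (⟨σ (σ.symm i'.1), by rw [hL']; rw [hL]; exact i'.2⟩ : {i' : Fin m' // L' i' ≤ r}) = i' :=
      Subtype.ext (σ.apply_symm_apply i'.1)
    rw [this]

lemma exists_list_repr (B : Multiset (Pt n)) :
    ∃ (m : ℕ) (L : Fin m → Pt n), (List.ofFn L : Multiset (Pt n)) = B :=
  ⟨B.toList.length, B.toList.get, by rw [List.ofFn_get]; exact B.coe_toList⟩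

lemma hil_of_isFreeWith {P : PersMod k n} {B : Multiset (Pt n)} (h : IsFreeWith P B)
    (r : Pt n) : Hil P r = countLe B r := by
  obtain ⟨m, L, hB, hiso⟩ := h
  rw [hil_eq_of_persIso hiso, hil_freeModFin, hB]

lemma persIso_of_isFreeWith_eq {P P' : PersMod k n} {B B' : Multiset (Pt n)}
    (h : IsFreeWith P B) (h' : IsFreeWith P' B') (hBB : B = B') : PersIso P P' := by
  obtain ⟨m, L, hB, hiso⟩ := h
  obtain ⟨m', L', hB', hiso'⟩ := h'
  obtain ⟨σ, hσ⟩ := exists_equiv_of_ofFn_eq L L' (by rw [← hB, ← hB', hBB])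
  exact persIso_trans hiso
    (persIso_trans (persIso_freeModFin_of_equiv σ hσ) (persIso_symm hiso'))

/-- **Proposition 5.2** (existence and uniqueness of minimal Hilbert decompositions).
Every finitely presentable `M` admits a minimal Hilbert decomposition of its Hilbert
function, and any two minimal Hilbert decompositions are isomorphic. -/
theorem minimal_hilbert_decomposition_exists_unique
    {k : Type} [Field k] {n : ℕ}
    (M : PersMod k n) (hM : FinitelyPresentable M) :
    (∃ (P Q : PersMod k n) (BP BQ : Multiset (Pt n)),
        IsMinHilbDecomp (fun r => (Hil M r : ℤ)) P Q BP BQ) ∧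
    (∀ (P Q : PersMod k n) (BP BQ : Multiset (Pt n))
        (P' Q' : PersMod k n) (BP' BQ' : Multiset (Pt n)),
        IsMinHilbDecomp (fun r => (Hil M r : ℤ)) P Q BP BQ →
        IsMinHilbDecomp (fun r => (Hil M r : ℤ)) P' Q' BP' BQ' →
        PersIso P P' ∧ PersIso Q Q') := by
  constructor
  · -- existence
    obtain ⟨B0, C0, hrep⟩ := exists_countLe_repr M hM
    set BP : Multiset (Pt n) := B0 - C0 with hBP_def
    set BQ : Multiset (Pt n) := C0 - B0 with hBQ_def
    obtain ⟨mp, LP, hLP⟩ := exists_list_repr BP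
    obtain ⟨mq, LQ, hLQ⟩ := exists_list_repr BQ
    refine ⟨freeModFin LP, freeModFin LQ, BP, BQ,
      ⟨mp, LP, hLP.symm, persIso_refl _⟩, ⟨mq, LQ, hLQ.symm, persIso_refl _⟩,
      fun r => ?_, fun x hx => ?_⟩
    · -- Hilbert function identity
      beta_reduce
      rw [show Hil (freeModFin LP) r = countLe BP r from by
          rw [hil_freeModFin, hLP],
        show Hil (freeModFin LQ) r = countLe BQ r from by
          rw [hil_freeModFin, hLQ]]
      have h1 : countLe B0 r = countLe BP r + countLe (B0 ∩ C0) r := by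
        rw [← countLe_add, hBP_def, Multiset.sub_add_inter]
      have h2 : countLe C0 r = countLe BQ r + countLe (B0 ∩ C0) r := by
        rw [← countLe_add, hBQ_def, Multiset.inter_comm, Multiset.sub_add_inter]
      have := hrep r
      omega
    · -- disjointness
      obtain ⟨hx1, hx2⟩ := hx
      have h1 : 0 < Multiset.count x BP := Multiset.count_pos.mpr hx1
      have h2 : 0 < Multiset.count x BQ := Multiset.count_pos.mpr hx2
      rw [hBP_def, Multiset.count_sub] at h1
      rw [hBQ_def, Multiset.count_sub] at h2
      omega
  · -- uniqueness
    intro P Q BP BQ P' Q' BP' BQ' h h'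
    obtain ⟨hfP, hfQ, hη, hdisj⟩ := h
    obtain ⟨hfP', hfQ', hη', hdisj'⟩ := h'
    have hc : ∀ r, countLe (BP + BQ') r = countLe (BP' + BQ) r := by
      intro r
      have e1 := hη r
      have e2 := hη' r
      beta_reduce at e1 e2
      rw [hil_of_isFreeWith hfP, hil_of_isFreeWith hfQ] at e1
      rw [hil_of_isFreeWith hfP', hil_of_isFreeWith hfQ'] at e2
      rw [countLe_add, countLe_add]
      omega
    have hmul : BP + BQ' = BP' + BQ :=
      countLe_inj (Multiset.card (BP + BQ')) _ _ le_rfl hc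
    have hcount : ∀ x : Pt n, Multiset.count x BP = Multiset.count x BP' ∧
        Multiset.count x BQ = Multiset.count x BQ' := by
      intro x
      have e := congrArg (Multiset.count x) hmul
      rw [Multiset.count_add, Multiset.count_add] at e
      have d1 : Multiset.count x BP = 0 ∨ Multiset.count x BQ = 0 := by
        by_contra hcon
        push_neg at hcon
        exact hdisj x ⟨Multiset.count_pos.mp (Nat.pos_of_ne_zero hcon.1),
          Multiset.count_pos.mp (Nat.pos_of_ne_zero hcon.2)⟩
      have d2 : Multiset.count x BP' = 0 ∨ Multiset.count x BQ' = 0 := by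
        by_contra hcon
        push_neg at hcon
        exact hdisj' x ⟨Multiset.count_pos.mp (Nat.pos_of_ne_zero hcon.1),
          Multiset.count_pos.mp (Nat.pos_of_ne_zero hcon.2)⟩
      omega
    have hBPeq : BP = BP' := Multiset.ext.mpr (fun x => (hcount x).1)
    have hBQeq : BQ = BQ' := Multiset.ext.mpr (fun x => (hcount x).2)
    exact ⟨persIso_of_isFreeWith_eq hfP hfP' hBPeq,
      persIso_of_isFreeWith_eq hfQ hfQ' hBQeq⟩

end
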